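/- Let F be an invertible real 3×3 matrix, let U = √(FᵀF) and V = √(F·Fᵀ) be the right and left stretch tensors (the unique symmetric positive definite square roots), and let R = F·U⁻¹ be the orthogonal polar factor. Then for all G, Λ ∈ ℝ the Kirchhoff stress of Becker's law equals V times the Hencky stress: R · (2G · log(U) + Λ · tr(log U) · 1) · Fᵀ = V · (2G · log(V) + Λ · tr(log V) · 1). -/

import Mathlib

open Matrix

/-- The principal matrix logarithm of a symmetric (positive definite) matrix, obtained by
applying the real logarithm to the eigenvalues in a spectral decomposition (junk value `0`
on non-Hermitian input). -/
noncomputable def matLog (A : Matrix (Fin 3) (Fin 3) ℝ) : Matrix (Fin 3) (Fin 3) ℝ :=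
  if hA : A.IsHermitian then hA.cfc Real.log else 0

/-- Conjugation by an orthogonal matrix as a star algebra homomorphism. -/
noncomputable def conjBy (R : Matrix (Fin 3) (Fin 3) ℝ) (h1 : R * Rᵀ = 1) (h2 : Rᵀ * R = 1) :
    Matrix (Fin 3) (Fin 3) ℝ →⋆ₐ[ℝ] Matrix (Fin 3) (Fin 3) ℝ where
  toFun X := R * X * Rᵀ
  map_one' := by show R * 1 * Rᵀ = 1; rw [mul_one, h1]
  map_mul' X Y := by
    show R * (X * Y) * Rᵀ = R * X * Rᵀ * (R * Y * Rᵀ)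
    have : R * X * Rᵀ * (R * Y * Rᵀ) = R * X * (Rᵀ * R) * Y * Rᵀ := by noncomm_ring
    rw [this, h2, mul_one]; noncomm_ring
  map_zero' := by simp
  map_add' X Y := by noncomm_ring
  commutes' r := by
    simp only [Algebra.algebraMap_eq_smul_one, Matrix.mul_smul, Matrix.smul_mul, mul_one, h1]
  map_star' X := by
    show R * star X * Rᵀ = star (R * X * Rᵀ)
    simp [star_eq_conjTranspose, conjTranspose_eq_transpose_of_trivial, transpose_mul,
      Matrix.mul_assoc]

theorem matLog_eq_cfc (A : Matrix (Fin 3) (Fin 3) ℝ) (hA : A.IsHermitian) :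
    matLog A = cfc Real.log A := by
  rw [matLog, dif_pos hA, hA.cfc_eq]

/-- Let `F` be invertible, `U = √(FᵀF)` and `V = √(FFᵀ)` the right and
left stretch tensors (the unique symmetric positive definite square roots), and
`R = F·U⁻¹` the orthogonal polar factor. Then for all `G, Λ` the Kirchhoff stress of
Becker's law equals `V` times the Hencky stress:
`R·(2G·log U + Λ·tr(log U)·1)·Fᵀ = V·(2G·log V + Λ·tr(log V)·1)`. -/
theorem becker_kirchhoff_eq_V_mul_hencky
    (F U V : Matrix (Fin 3) (Fin 3) ℝ) (hF : IsUnit F)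
    (hU : U.PosDef) (hUsq : U * U = Fᵀ * F)
    (hV : V.PosDef) (hVsq : V * V = F * Fᵀ)
    (G Lam : ℝ) :
    (F * U⁻¹) * ((2 * G) • matLog U + (Lam * (matLog U).trace) • 1) * Fᵀ
      = V * ((2 * G) • matLog V + (Lam * (matLog V).trace) • 1) := by
  set R := F * U⁻¹ with hR
  have hUt : Uᵀ = U := by
    have := hU.1
    rwa [IsHermitian, conjTranspose_eq_transpose_of_trivial] at this
  have hUunit : IsUnit U := hU.isUnit
  have hUinv : U * U⁻¹ = 1 := mul_nonsing_inv U (isUnit_iff_isUnit_det U |>.mp hUunit)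
  have hUinv' : U⁻¹ * U = 1 := nonsing_inv_mul U (isUnit_iff_isUnit_det U |>.mp hUunit)
  have hUinvT : U⁻¹ᵀ = U⁻¹ := by rw [transpose_nonsing_inv, hUt]
  have hRt : Rᵀ = U⁻¹ * Fᵀ := by rw [hR, transpose_mul, hUinvT]
  have hRtR : Rᵀ * R = 1 := by
    rw [hRt, hR]
    calc U⁻¹ * Fᵀ * (F * U⁻¹) = U⁻¹ * (Fᵀ * F) * U⁻¹ := by noncomm_ring
    _ = U⁻¹ * (U * U) * U⁻¹ := by rw [hUsq]
    _ = (U⁻¹ * U) * (U * U⁻¹) := by noncomm_ring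
    _ = 1 := by rw [hUinv, hUinv', mul_one]
  have hRRt : R * Rᵀ = 1 := mul_eq_one_comm.mp hRtR
  have hRU : R * U = F := by rw [hR, Matrix.mul_assoc, hUinv', mul_one]
  have hURt : U * Rᵀ = Fᵀ := by
    rw [← hUt, ← transpose_mul, hRU]
  -- V = R U Rᵀ
  have hVeq : V = R * U * Rᵀ := by
    have hpos : (R * U * Rᵀ).PosSemidef := by
      have := hU.posSemidef.mul_mul_conjTranspose_same R
      rwa [conjTranspose_eq_transpose_of_trivial] at this
    open scoped MatrixOrder in
    refine (CFC.sq_eq_sq_iff V (R * U * Rᵀ) hV.posSemidef.nonneg hpos.nonneg).mp ?_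
    rw [pow_two, pow_two, hVsq]
    calc F * Fᵀ = (R * U) * (U * Rᵀ) := by rw [hRU, hURt]
    _ = R * U * Rᵀ * (R * U * Rᵀ) := by
        rw [show R * U * Rᵀ * (R * U * Rᵀ) = R * U * (Rᵀ * R) * (U * Rᵀ) by noncomm_ring,
          hRtR, mul_one, Matrix.mul_assoc]
  -- functional calculus transfer
  have hUsa : IsSelfAdjoint U := hU.1
  have hVsa : IsSelfAdjoint V := hV.1
  have hlogcont : ContinuousOn Real.log (spectrum ℝ U) :=
    Real.continuousOn_log.mono (by
      intro x hx hx0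
      simp only [Set.mem_singleton_iff] at hx0
      subst hx0
      exact (spectrum.zero_notMem_iff ℝ).mpr hUunit hx)
  let φ := conjBy R hRRt hRtR
  have hφcont : Continuous φ := by
    show Continuous fun X : Matrix (Fin 3) (Fin 3) ℝ => R * X * Rᵀ
    exact (continuous_const.matrix_mul continuous_id).matrix_mul continuous_const
  have hφU : φ U = V := by show R * U * Rᵀ = V; exact hVeq.symm
  have hlogV : matLog V = R * matLog U * Rᵀ := by
    rw [matLog_eq_cfc U hU.1, matLog_eq_cfc V hV.1, ← hφU]
    have := StarAlgHom.map_cfc φ Real.log U hlogcont hφcont hUsa (hφU ▸ hVsa)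
    rw [← this]
    rfl
  -- trace
  have htr : (matLog V).trace = (matLog U).trace := by
    rw [hlogV, trace_mul_comm, ← Matrix.mul_assoc, hRtR, Matrix.one_mul]
  -- matLog U commutes with U
  have hcomm : matLog U * U = U * matLog U := by
    rw [matLog_eq_cfc U hU.1]
    have e1 : cfc (fun x : ℝ => Real.log x * x) U
        = cfc Real.log U * cfc (fun x : ℝ => x) U := cfc_mul _ _ U hlogcont continuousOn_id
    have e2 : cfc (fun x : ℝ => x * Real.log x) U
        = cfc (fun x : ℝ => x) U * cfc Real.log U := cfc_mul _ _ U continuousOn_id hlogcont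
    rw [cfc_id' ℝ U hUsa] at e1 e2
    rw [← e1, ← e2]
    exact cfc_congr fun x _ => mul_comm _ _
  -- wrap up
  set L := matLog U with hL
  set S : Matrix (Fin 3) (Fin 3) ℝ := (2 * G) • L + (Lam * L.trace) • 1 with hS
  have hSU : S * U = U * S := by
    rw [hS, Matrix.add_mul, Matrix.mul_add, Matrix.smul_mul, Matrix.mul_smul, hcomm,
      Matrix.smul_mul, Matrix.mul_smul, Matrix.one_mul, Matrix.mul_one]
  calc R * S * Fᵀ = R * (S * U) * Rᵀ := by rw [← hURt]; noncomm_ring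
  _ = R * U * Rᵀ * (R * S * Rᵀ) := by
      rw [hSU, show R * U * Rᵀ * (R * S * Rᵀ) = R * U * (Rᵀ * R) * S * Rᵀ by noncomm_ring,
        hRtR, mul_one]
      noncomm_ring
  _ = V * (R * S * Rᵀ) := by rw [← hVeq]
  _ = V * ((2 * G) • matLog V + (Lam * (matLog V).trace) • 1) := by
      rw [htr, hlogV, hS]
      congr 1
      simp only [Matrix.mul_add, Matrix.add_mul, Matrix.mul_smul, Matrix.smul_mul,
        Matrix.mul_one, Matrix.mul_assoc]
      rw [hRRt]
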